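/- Let Q be a bounded quasinilpotent operator on a complex Banach space X. If z ∈ G_Q, i.e., limsup_{t→+∞} ‖e^{tzQ}‖ < ∞, then for every k ∈ ℕ, limsup_{s→+∞} ‖(I − s z Q)^{-k}‖ < ∞; i.e., G_Q ⊂ A_Q^k for all k. -/

import Mathlib

open NormedSpace Filter MeasureTheory intervalIntegral

set_option maxHeartbeats 1000000
set_option synthInstance.maxHeartbeats 1000000

lemma aux_isUnit_one_sub {X : Type*} [NormedAddCommGroup X] [NormedSpace ℂ X] [CompleteSpace X]
    (Q : X →L[ℂ] X) (hQ : spectrum ℂ Q = {0}) (c : ℂ) : IsUnit (1 - c • Q) := by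
  have h1 : (1 : ℂ) ∉ spectrum ℂ (c • Q) := by
    rcases eq_or_ne c 0 with rfl | hc
    · simp [spectrum.mem_iff]
    · rw [show c • Q = (Units.mk0 c hc : ℂˣ) • Q from rfl, spectrum.unit_smul_eq_smul, hQ]
      intro h
      obtain ⟨x, hx, hx1⟩ := h
      simp at hx
      simp [hx] at hx1
  rw [spectrum.notMem_iff] at h1
  simpa using h1

lemma aux_inverse_norm_le {X : Type*} [NormedAddCommGroup X] [NormedSpace ℂ X] [CompleteSpace X]
    (B : X →L[ℂ] X) (hu : IsUnit (1 - B)) (M : ℝ)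
    (hM : ∀ u : ℝ, 0 ≤ u → ‖exp (u • B)‖ ≤ M) :
    ‖Ring.inverse (1 - B)‖ ≤ M := by
  have hM0 : 0 ≤ M := le_trans (norm_nonneg _) (hM 0 le_rfl)
  have hexp_cont : Continuous fun u : ℝ => exp (u • B) :=
    (continuous_iff_continuousAt.2 fun x => (exp_analytic (𝕂 := ℂ) (𝔸 := X →L[ℂ] X) x).continuousAt).comp (continuous_id.smul continuous_const)
  set f : ℝ → (X →L[ℂ] X) := fun u => Real.exp (-u) • exp (u • B) with hf
  have hf_cont : Continuous f := ((Real.continuous_exp.comp continuous_neg).smul hexp_cont)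
  set I : ℝ → (X →L[ℂ] X) := fun b => ∫ u in (0:ℝ)..b, f u with hI
  -- derivative identity
  have hcommB : ∀ t : ℝ, B * exp (t • B) = exp (t • B) * B := by
    intro t
    exact (((Commute.refl B).smul_right t).exp_right).eq
  have hderiv : ∀ t : ℝ, HasDerivAt f (Real.exp (-t) • ((B - 1) * exp (t • B))) t := by
    intro t
    have h1 : HasDerivAt (fun u : ℝ => Real.exp (-u)) (-Real.exp (-t)) t := by
      simpa using (hasDerivAt_neg t).exp
    have h2 : HasDerivAt (fun u : ℝ => exp (u • B)) (exp (t • B) * B) t := by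
      exact hasDerivAt_exp_smul_const B t
    have h3 := h1.smul h2
    refine h3.congr_deriv ?_; symm
    rw [sub_mul, one_mul, smul_sub, ← hcommB, neg_smul, sub_eq_add_neg]
  -- FTC
  have hkey : ∀ b : ℝ, (1 - B) * I b = 1 - Real.exp (-b) • exp (b • B) := by
    intro b
    have hint : IntervalIntegrable (fun u => Real.exp (-u) • ((B - 1) * exp (u • B))) volume 0 b :=
      (((Real.continuous_exp.comp continuous_neg).smul
        (continuous_const.mul hexp_cont))).intervalIntegrable 0 b
    have hftc : (∫ u in (0:ℝ)..b, Real.exp (-u) • ((B - 1) * exp (u • B))) = f b - f 0 :=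
      intervalIntegral.integral_eq_sub_of_hasDerivAt (fun t _ => hderiv t) hint
    have hcomm : ∀ u : ℝ, (1 - B) * f u = -(Real.exp (-u) • ((B - 1) * exp (u • B))) := by
      intro u
      calc (1 - B) * f u = Real.exp (-u) • ((1 - B) * exp (u • B)) := mul_smul_comm _ _ _
        _ = -(Real.exp (-u) • ((B - 1) * exp (u • B))) := by
            rw [← smul_neg, ← neg_mul, neg_sub]
    have hmul : (1 - B) * I b = ∫ u in (0:ℝ)..b, (1 - B) * f u := by
      have h := (ContinuousLinearMap.mul ℂ (X →L[ℂ] X) (1 - B)).intervalIntegral_comp_comm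
        (hf_cont.intervalIntegrable (μ := volume) 0 b)
      simpa only [ContinuousLinearMap.mul_apply'] using h.symm
    rw [hmul]
    calc (∫ u in (0:ℝ)..b, (1 - B) * f u)
        = ∫ u in (0:ℝ)..b, -(Real.exp (-u) • ((B - 1) * exp (u • B))) := by
          simp only [hcomm]
      _ = -(f b - f 0) := by rw [intervalIntegral.integral_neg, hftc]
      _ = 1 - Real.exp (-b) • exp (b • B) := by
          simp [hf, neg_sub]
  -- limit of the remainder term
  have hrem : Tendsto (fun b : ℝ => Real.exp (-b) • exp (b • B)) atTop (nhds 0) := by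
    rw [tendsto_zero_iff_norm_tendsto_zero]
    apply squeeze_zero' (Eventually.of_forall fun b => norm_nonneg _)
      (g := fun b : ℝ => Real.exp (-b) * M)
    · filter_upwards [eventually_ge_atTop (0:ℝ)] with b hb
      rw [norm_smul (Real.exp (-b)) (exp (b • B)), Real.norm_eq_abs,
        abs_of_pos (Real.exp_pos _)]
      exact mul_le_mul_of_nonneg_left (hM b hb) (Real.exp_pos _).le
    · simpa using Real.tendsto_exp_neg_atTop_nhds_zero.mul_const M
  have h1 : Tendsto (fun b => (1 - B) * I b) atTop (nhds 1) := by
    simp only [hkey]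
    simpa using tendsto_const_nhds.sub hrem
  have hIlim : Tendsto I atTop (nhds (Ring.inverse (1 - B))) := by
    have h2 := h1.const_mul (Ring.inverse (1 - B))
    rw [mul_one] at h2
    refine h2.congr fun b => ?_
    rw [← mul_assoc, Ring.inverse_mul_cancel _ hu, one_mul]
  -- uniform bound on I
  have hInorm : ∀ b : ℝ, 0 ≤ b → ‖I b‖ ≤ M := by
    intro b hb
    have hbound : (∫ u in (0:ℝ)..b, ‖f u‖) ≤ ∫ u in (0:ℝ)..b, Real.exp (-u) * M := by
      refine intervalIntegral.integral_mono_on hb (hf_cont.norm.intervalIntegrable 0 b)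
        (((Real.continuous_exp.comp continuous_neg).mul continuous_const).intervalIntegrable 0 b)
        fun u hu => ?_
      show ‖Real.exp (-u) • exp (u • B)‖ ≤ Real.exp (-u) * M
      rw [norm_smul (Real.exp (-u)) (exp (u • B)), Real.norm_eq_abs,
        abs_of_pos (Real.exp_pos _)]
      exact mul_le_mul_of_nonneg_left (hM u hu.1) (Real.exp_pos _).le
    have hev : (∫ u in (0:ℝ)..b, Real.exp (-u) * M) = (1 - Real.exp (-b)) * M := by
      have : (∫ u in (0:ℝ)..b, Real.exp (-u)) = 1 - Real.exp (-b) := by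
        rw [intervalIntegral.integral_comp_neg fun u => Real.exp u]
        rw [integral_exp]
        simp
      rw [intervalIntegral.integral_mul_const, this]
    calc ‖I b‖ ≤ ∫ u in (0:ℝ)..b, ‖f u‖ := intervalIntegral.norm_integral_le_integral_norm hb
      _ ≤ (1 - Real.exp (-b)) * M := by rw [← hev]; exact hbound
      _ ≤ 1 * M := by
          apply mul_le_mul_of_nonneg_right _ hM0
          linarith [(Real.exp_pos (-b)).le]
      _ = M := one_mul M
  exact le_of_tendsto hIlim.norm
    (by filter_upwards [eventually_ge_atTop (0:ℝ)] with b hb using hInorm b hb)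

theorem semigroupBounded_subset_abelSet
    {X : Type*} [NormedAddCommGroup X] [NormedSpace ℂ X] [CompleteSpace X]
    (Q : X →L[ℂ] X) (hQ : spectrum ℂ Q = {0}) (z : ℂ)
    (hz : Filter.IsBoundedUnder (· ≤ ·) Filter.atTop
        (fun t : ℝ => ‖NormedSpace.exp (((t : ℂ) * z) • Q)‖)) :
    ∀ k : ℕ, Filter.IsBoundedUnder (· ≤ ·) Filter.atTop
        (fun s : ℝ => ‖(Ring.inverse (1 - ((s : ℂ) * z) • Q)) ^ k‖) := by
  set B : X →L[ℂ] X := z • Q with hB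
  have heq : ∀ t : ℝ, ((t : ℂ) * z) • Q = t • B := by
    intro t; rw [mul_smul, hB]; norm_num
  -- uniform bound on the semigroup for t ≥ 0
  obtain ⟨C, hC⟩ := hz
  rw [Filter.eventually_map] at hC
  obtain ⟨T, hT⟩ := hC.exists_forall_of_atTop
  set T' : ℝ := max T 0 with hT'
  obtain ⟨C', hC'⟩ := (isCompact_Icc (a := (0:ℝ)) (b := T')).exists_bound_of_continuousOn
    (f := fun t : ℝ => exp (t • B))
    (((continuous_iff_continuousAt.2 fun x => (exp_analytic (𝕂 := ℂ) (𝔸 := X →L[ℂ] X) x).continuousAt).comp (continuous_id.smul continuous_const)).continuousOn)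
  set M : ℝ := max C C' with hM
  have hMb : ∀ t : ℝ, 0 ≤ t → ‖exp (t • B)‖ ≤ M := by
    intro t ht
    rcases le_or_gt t T' with h | h
    · exact le_trans (hC' t ⟨ht, h⟩) (le_max_right _ _)
    · have := hT t (le_trans (le_max_left T 0) h.le)
      rw [heq t] at this
      exact le_trans this (le_max_left _ _)
  have hM0 : 0 ≤ M := le_trans (norm_nonneg _) (hMb 0 le_rfl)
  intro k
  refine ⟨M ^ k, ?_⟩
  rw [Filter.eventually_map]
  filter_upwards [eventually_ge_atTop (0:ℝ)] with s hs
  rw [heq s]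
  have hunit : IsUnit (1 - s • B) := by
    rw [← heq s]; exact aux_isUnit_one_sub Q hQ _
  have hbound : ‖Ring.inverse (1 - s • B)‖ ≤ M := by
    refine aux_inverse_norm_le (s • B) hunit M fun u hu => ?_
    rw [smul_smul]
    exact hMb (u * s) (mul_nonneg hu hs)
  rcases Nat.eq_zero_or_pos k with rfl | hk
  · simpa using (id ContinuousLinearMap.norm_id_le : ‖(1 : X →L[ℂ] X)‖ ≤ 1)
  · calc ‖Ring.inverse (1 - s • B) ^ k‖ ≤ ‖Ring.inverse (1 - s • B)‖ ^ k := norm_pow_le' _ hk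
      _ ≤ M ^ k := pow_le_pow_left₀ (norm_nonneg _) hbound k
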